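/- Let s ≥ 2 and let 1 ≤ k_1 ≤ k_2 ≤ ⋯ ≤ k_s < n and 1 < l_1 ≤ l_2 ≤ ⋯ ≤ l_s ≤ n satisfy k_i < l_i and l_i − k_i + 1 ≥ m for all i. Set J := J_{k_1 l_1} J_{k_2 l_2} ⋯ J_{k_s l_s} and J' := J_{k_2 l_2} ⋯ J_{k_s l_s}. Let f' = X_{1c_1}X_{2c_2}⋯X_{mc_m} be any diagonal monomial of Y_{k_1 l_1} and set c_0 = k_1 − 1. Then the colon ideal (J : f') is contained in the ideal generated by J' together with the variables X_{ib} with 1 ≤ i ≤ m and c_{i−1} < b < c_i. -/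

import Mathlib

open MvPolynomial

/-- The exponent vector of the diagonal monomial with column sequence `c`
(rows `1,…,m`, row `i` contributing the variable `X (i, c i)`). -/
noncomputable def expVec (m : ℕ) (c : ℕ → ℕ) : (ℕ × ℕ) →₀ ℕ :=
  ∑ i ∈ Finset.Icc 1 m, Finsupp.single (i, c i) 1

/-- The diagonal monomial `X_{1 c₁} X_{2 c₂} ⋯ X_{m c_m}`. -/
noncomputable def diagMon (K : Type*) [Field K] (m : ℕ) (c : ℕ → ℕ) :
    MvPolynomial (ℕ × ℕ) K :=
  ∏ i ∈ Finset.Icc 1 m, MvPolynomial.X (i, c i)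

/-- `tauGt a b` : the monomial with exponent vector `a` is strictly larger than the one
with exponent vector `b` in the lexicographic monomial order τ induced by
`X 11 > X 12 > ⋯ > X 1n > X 21 > ⋯ > X mn` : at the most significant variable where
they differ (i.e. the lexicographically smallest index pair), `a` has the bigger exponent. -/
def tauGt (a b : (ℕ × ℕ) →₀ ℕ) : Prop :=
  ∃ p : ℕ × ℕ, b p < a p ∧
    ∀ q : ℕ × ℕ, (q.1 < p.1 ∨ (q.1 = p.1 ∧ q.2 < p.2)) → a q = b q

/-- `c` is the column sequence of a diagonal monomial of the submatrix `Y_{kl}`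
(columns `k` through `l`): strictly increasing on `1,…,m` with values in `[k,l]`. -/
def IsDiagSeq (m k l : ℕ) (c : ℕ → ℕ) : Prop :=
  (∀ i, 1 ≤ i → i < m → c i < c (i + 1)) ∧ k ≤ c 1 ∧ c m ≤ l

/-- The ideal `J_{kl}` of `K[X]` generated by all diagonal monomials of `Y_{kl}`. -/
noncomputable def Jkl (K : Type*) [Field K] (m k l : ℕ) : Ideal (MvPolynomial (ℕ × ℕ) K) :=
  Ideal.span {g | ∃ c, IsDiagSeq m k l c ∧ g = diagMon K m c}


lemma expVec_apply (m : ℕ) (c : ℕ → ℕ) (i b : ℕ) :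
    expVec m c (i, b) = if i ∈ Finset.Icc 1 m ∧ c i = b then 1 else 0 := by
  classical
  rw [expVec, Finsupp.finset_sum_apply]
  by_cases hi : i ∈ Finset.Icc 1 m
  · rw [Finset.sum_eq_single i]
    · simp only [Finsupp.single_apply]
      by_cases h2 : c i = b <;> simp [hi, h2, Prod.ext_iff]
    · intro j _ hj; simp [Finsupp.single_apply, Prod.ext_iff, hj]
    · intro h; exact absurd hi h
  · rw [Finset.sum_eq_zero, if_neg (by tauto)]
    intro j hj
    have : j ≠ i := fun h => hi (h ▸ hj)
    simp [Finsupp.single_apply, Prod.ext_iff, this]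

lemma sum_expVec_apply {ι : Type*} (m : ℕ) (G : Finset ι) (F : ι → ℕ → ℕ) (i b : ℕ)
    (hi : 1 ≤ i) (him : i ≤ m) :
    (∑ j ∈ G, expVec m (F j)) (i, b) = (G.filter (fun j => F j i = b)).card := by
  classical
  rw [Finsupp.finset_sum_apply]
  rw [Finset.card_filter]
  apply Finset.sum_congr rfl
  intro j _
  rw [expVec_apply]
  simp [Finset.mem_Icc, hi, him]

lemma sum_expVec_apply_zero {ι : Type*} (m : ℕ) (G : Finset ι) (F : ι → ℕ → ℕ) (i b : ℕ)
    (hi : i ∉ Finset.Icc 1 m) :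
    (∑ j ∈ G, expVec m (F j)) (i, b) = 0 := by
  classical
  rw [Finsupp.finset_sum_apply]
  apply Finset.sum_eq_zero
  intro j _
  rw [expVec_apply, if_neg (by tauto)]

lemma cnt_lemma {s : ℕ} (u : Fin s → ℕ) (hu : Monotone u) (P : ℕ → Prop) [DecidablePred P]
    (hP : ∀ x y, x ≤ y → P y → P x) (t : Fin s) :
    P (u t) ↔ (t : ℕ) < (Finset.univ.filter (fun t' => P (u t'))).card := by
  constructor
  · intro h
    have hsub : Finset.Iic t ⊆ Finset.univ.filter (fun t' => P (u t')) := by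
      intro t' ht'
      simp only [Finset.mem_filter, Finset.mem_univ, true_and]
      exact hP _ _ (hu (Finset.mem_Iic.1 ht')) h
    calc (t:ℕ) < (t:ℕ) + 1 := Nat.lt_succ_self _
    _ = (Finset.Iic t).card := by rw [Fin.card_Iic]
    _ ≤ _ := Finset.card_le_card hsub
  · intro h
    by_contra hP'
    have hsub : Finset.univ.filter (fun t' => P (u t')) ⊆ Finset.Iio t := by
      intro t' ht'
      simp only [Finset.mem_filter, Finset.mem_univ, true_and] at ht'
      rw [Finset.mem_Iio]
      by_contra hle
      exact hP' (hP _ _ (hu (not_lt.1 hle)) ht')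
    have := Finset.card_le_card hsub
    rw [Fin.card_Iio] at this
    omega

lemma perm_count {s : ℕ} (σ : Equiv.Perm (Fin s)) (P : Fin s → Prop) [DecidablePred P] :
    (Finset.univ.filter (fun t => P (σ t))).card = (Finset.univ.filter P).card := by
  apply Finset.card_bij (fun t _ => σ t)
  · intro t ht; simp only [Finset.mem_filter, Finset.mem_univ, true_and] at *; exact ht
  · intro a _ b _ h; exact σ.injective h
  · intro b hb
    refine ⟨σ.symm b, ?_, by simp⟩
    simp only [Finset.mem_filter, Finset.mem_univ, true_and, Equiv.apply_symm_apply] at *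
    exact hb

lemma sum_skip {M : Type*} [AddCommMonoid M] (s p : ℕ) (hp : p < s) (g : ℕ → M) :
    ∑ t ∈ Finset.range s, g t = g p + ∑ t ∈ Finset.range (s-1), g (if t < p then t else t + 1) := by
  have h1 : ∑ t ∈ Finset.range (s-1), g (if t < p then t else t + 1)
      = ∑ t ∈ (Finset.range s).erase p, g t := by
    apply Finset.sum_nbij' (fun t => if t < p then t else t + 1) (fun t => if t < p then t else t - 1)
    · intro t ht
      simp only [Finset.mem_range] at ht
      simp only [Finset.mem_erase, Finset.mem_range]
      split <;> omega
    · intro t ht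
      simp only [Finset.mem_erase, Finset.mem_range] at ht
      simp only [Finset.mem_range]
      split <;> omega
    · intro t ht
      simp only [Finset.mem_range] at ht
      split_ifs <;> omega
    · intro t ht
      simp only [Finset.mem_erase, Finset.mem_range] at ht
      split_ifs <;> omega
    · intro t ht; rfl
  rw [h1, Finset.add_sum_erase _ g (Finset.mem_range.2 hp)]

lemma core (m s : ℕ) (hm : 1 ≤ m) (hs : 2 ≤ s) (k l c : ℕ → ℕ)
    (hkmono' : ∀ a b, 1 ≤ a → a ≤ b → b ≤ s → k a ≤ k b)
    (hlmono' : ∀ a b, 1 ≤ a → a ≤ b → b ≤ s → l a ≤ l b)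
    (hk1 : 1 ≤ k 1)
    (hc : IsDiagSeq m (k 1) (l 1) c) (hc0 : c 0 = k 1 - 1)
    (A : Fin s → ℕ → ℕ) (hA : ∀ j : Fin s, IsDiagSeq m (k ((j:ℕ)+1)) (l ((j:ℕ)+1)) (A j))
    (e : (ℕ × ℕ) →₀ ℕ)
    (hle : ∑ j : Fin s, expVec m (A j) ≤ e + expVec m c)
    (hgap : ∀ i b, 1 ≤ i → i ≤ m → c (i-1) < b → b < c i → e (i, b) = 0) :
    ∃ B : ℕ → ℕ → ℕ, (∀ t, t < s - 1 → IsDiagSeq m (k (t+2)) (l (t+2)) (B t)) ∧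
      ∑ t ∈ Finset.range (s-1), expVec m (B t) ≤ e := by
  classical
  -- sorted rows
  set w : ℕ → Fin s → ℕ := fun i j => A j i with hw
  set S : ℕ → Fin s → ℕ := fun i => w i ∘ Tuple.sort (w i) with hS
  have hmono : ∀ i, Monotone (S i) := fun i => Tuple.monotone_sort (w i)
  have hcountP : ∀ (i : ℕ) (P : ℕ → Prop) [DecidablePred P],
      (Finset.univ.filter (fun t => P (S i t))).card
        = (Finset.univ.filter (fun j => P (A j i))).card := by
    intro i P _
    exact perm_count (Tuple.sort (w i)) (fun j => P (A j i))
  -- counts of A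
  set T : ℕ → ℕ → ℕ := fun i b => (Finset.univ.filter (fun j : Fin s => A j i = b)).card with hT
  have hle' : ∀ i b, 1 ≤ i → i ≤ m →
      T i b ≤ e (i, b) + (if c i = b then 1 else 0) := by
    intro i b hi him
    have h1 := hle (i, b)
    rw [sum_expVec_apply m Finset.univ A i b hi him] at h1
    rw [Finsupp.add_apply, expVec_apply] at h1
    simpa [Finset.mem_Icc, hi, him] using h1
  have hzero : ∀ i b, 1 ≤ i → i ≤ m → c (i-1) < b → b < c i → T i b = 0 := by
    intro i b hi him h1 h2
    have := hle' i b hi him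
    rw [hgap i b hi him h1 h2, if_neg (by omega)] at this
    omega
  -- no entry of row i lies in the gap
  have hnogap : ∀ i b (j : Fin s), 1 ≤ i → i ≤ m → c (i-1) < b → b < c i → A j i ≠ b := by
    intro i b j hi him h1 h2 hEq
    have h0 := hzero i b hi him h1 h2
    simp only [hT] at h0
    have hmem : j ∈ Finset.univ.filter (fun j : Fin s => A j i = b) := by
      simp [hEq]
    have := Finset.card_pos.2 ⟨j, hmem⟩
    omega
  -- column strictness of sorted rows
  have hcol : ∀ (t : Fin s) i, 1 ≤ i → i < m → S i t < S (i+1) t := by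
    intro t i hi him
    set v := S (i+1) t with hv
    have h1 : (t:ℕ) < (Finset.univ.filter (fun t' => S (i+1) t' ≤ v)).card :=
      (cnt_lemma (S (i+1)) (hmono (i+1)) (· ≤ v) (fun x y hxy hy => le_trans hxy hy) t).1 le_rfl
    rw [hcountP (i+1) (· ≤ v)] at h1
    have h2 : (Finset.univ.filter (fun j : Fin s => A j (i+1) ≤ v))
        ⊆ (Finset.univ.filter (fun j : Fin s => A j i < v)) := by
      intro j hj
      simp only [Finset.mem_filter, Finset.mem_univ, true_and] at *
      exact lt_of_lt_of_le ((hA j).1 i hi him) hj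
    have h3 : (t:ℕ) < (Finset.univ.filter (fun j : Fin s => A j i < v)).card :=
      lt_of_lt_of_le h1 (Finset.card_le_card h2)
    rw [← hcountP i (· < v)] at h3
    exact (cnt_lemma (S i) (hmono i) (· < v) (fun x y hxy hy => lt_of_le_of_lt hxy hy) t).2 h3
  -- sorted row 1 dominates k
  have hrow1 : ∀ t : Fin s, k ((t:ℕ)+1) ≤ S 1 t := by
    intro t
    by_contra hlt
    push_neg at hlt
    have h1 := (cnt_lemma (S 1) (hmono 1) (· < k ((t:ℕ)+1))
      (fun x y hxy hy => lt_of_le_of_lt hxy hy) t).1 hlt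
    rw [hcountP 1 (· < k ((t:ℕ)+1))] at h1
    have h2 : (Finset.univ.filter (fun j : Fin s => A j 1 < k ((t:ℕ)+1)))
        ⊆ (Finset.univ.filter (fun j : Fin s => (j:ℕ) < (t:ℕ))) := by
      intro j hj
      simp only [Finset.mem_filter, Finset.mem_univ, true_and] at *
      have hk := (hA j).2.1
      by_contra hle2
      push_neg at hle2
      have := hkmono' ((t:ℕ)+1) ((j:ℕ)+1) (by omega) (by omega) (by omega)
      omega
    have h3 := Finset.card_le_card h2
    have h4 : (Finset.univ.filter (fun j : Fin s => (j:ℕ) < (t:ℕ))).card = (t:ℕ) := by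
      have : (Finset.univ.filter (fun j : Fin s => (j:ℕ) < (t:ℕ))) = Finset.Iio t := by
        ext j
        simp only [Finset.mem_filter, Finset.mem_univ, true_and, Finset.mem_Iio, Fin.lt_def]
      rw [this, Fin.card_Iio]
    omega
  -- sorted row m dominated by l
  have hrowm : ∀ t : Fin s, S m t ≤ l ((t:ℕ)+1) := by
    intro t
    apply (cnt_lemma (S m) (hmono m) (· ≤ l ((t:ℕ)+1))
      (fun x y hxy hy => le_trans hxy hy) t).2
    rw [hcountP m (· ≤ l ((t:ℕ)+1))]
    have h2 : (Finset.univ.filter (fun j : Fin s => (j:ℕ) ≤ (t:ℕ)))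
        ⊆ (Finset.univ.filter (fun j : Fin s => A j m ≤ l ((t:ℕ)+1))) := by
      intro j hj
      simp only [Finset.mem_filter, Finset.mem_univ, true_and] at *
      have hl := (hA j).2.2
      have := hlmono' ((j:ℕ)+1) ((t:ℕ)+1) (by omega) (by omega) (by omega)
      omega
    have h4 : (Finset.univ.filter (fun j : Fin s => (j:ℕ) ≤ (t:ℕ))).card = (t:ℕ)+1 := by
      have : (Finset.univ.filter (fun j : Fin s => (j:ℕ) ≤ (t:ℕ))) = Finset.Iic t := by
        ext j
        simp only [Finset.mem_filter, Finset.mem_univ, true_and, Finset.mem_Iic, Fin.le_def]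
      rw [this, Fin.card_Iic]
    have := Finset.card_le_card h2
    omega
  -- removal positions
  set q : ℕ → ℕ := fun i => (Finset.univ.filter (fun t => S i t < c i)).card with hq
  set p : ℕ → ℕ := fun i => min (q i) (s-1) with hp
  have hp_lt : ∀ i, p i < s := fun i => by simp only [hp]; omega
  have hq1 : q 1 = 0 := by
    rw [hq]
    simp only []
    rw [Finset.card_eq_zero, Finset.filter_eq_empty_iff]
    intro t _
    push_neg
    by_contra hlt
    push_neg at hlt
    set b := S 1 t with hb
    have hbk : k 1 ≤ b := by
      have h1 : k ((Tuple.sort (w 1) t : ℕ)+1) ≤ A (Tuple.sort (w 1) t) 1 := (hA _).2.1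
      have h2 : k 1 ≤ k ((Tuple.sort (w 1) t : ℕ)+1) := hkmono' 1 _ le_rfl (by omega) (by omega)
      calc k 1 ≤ _ := le_trans h2 h1
      _ = b := rfl
    exact hnogap 1 b (Tuple.sort (w 1) t) le_rfl hm (by simp only [Nat.sub_self]; omega) hlt rfl
  have hp1 : p 1 = 0 := by rw [hp]; simp [hq1]
  -- q is antitone between consecutive rows
  have hqmono : ∀ i, 1 ≤ i → i < m → q (i+1) ≤ q i := by
    intro i hi him
    rw [hq]
    simp only []
    apply Finset.card_le_card
    apply Finset.monotone_filter_right
    intro t _ ht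
    have hle1 : S (i+1) t ≤ c i := by
      by_contra hgt
      push_neg at hgt
      -- S (i+1) t is in the gap of row i+1
      have : ∃ j : Fin s, A j (i+1) = S (i+1) t := ⟨Tuple.sort (w (i+1)) t, rfl⟩
      obtain ⟨j, hj⟩ := this
      exact hnogap (i+1) (S (i+1) t) j (by omega) (by omega)
        (by simpa using hgt) ht hj
    exact lt_of_lt_of_le (hcol t i hi him) hle1
  have hpmono : ∀ i, 1 ≤ i → i < m → p (i+1) ≤ p i := by
    intro i hi him
    have := hqmono i hi him
    rw [hp]
    simp only []
    omega
  -- F3 : if the count of c i in row i exceeds e, the removed element is c i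
  have hF3 : ∀ i, 1 ≤ i → i ≤ m → e (i, c i) < T i (c i) →
      S i ⟨p i, hp_lt i⟩ = c i := by
    intro i hi him hlt
    have hTpos : 0 < T i (c i) := by omega
    have : 0 < (Finset.univ.filter (fun t => S i t = c i)).card := by
      rw [hcountP i (· = c i)]
      exact hTpos
    obtain ⟨t0, ht0⟩ := Finset.card_pos.1 this
    simp only [Finset.mem_filter, Finset.mem_univ, true_and] at ht0
    have hqdef : q i = (Finset.univ.filter (fun t => S i t < c i)).card := by
      simp only [hq]
    have hqt0 : q i ≤ (t0:ℕ) := by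
      by_contra hq2
      push_neg at hq2
      rw [hqdef] at hq2
      have : S i t0 < c i := (cnt_lemma (S i) (hmono i) (· < c i)
        (fun x y hxy hy => lt_of_le_of_lt hxy hy) t0).2 hq2
      omega
    have hpq : p i = q i := by simp only [hp]; omega
    have hple : (⟨p i, hp_lt i⟩ : Fin s) ≤ t0 := by
      rw [Fin.le_def]
      show p i ≤ (t0:ℕ)
      omega
    have h1 : S i ⟨p i, hp_lt i⟩ ≤ c i := le_trans (hmono i hple) (le_of_eq ht0)
    have h2 : ¬ (S i ⟨p i, hp_lt i⟩ < c i) := by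
      intro hlt2
      have h3 := (cnt_lemma (S i) (hmono i) (· < c i)
        (fun x y hxy hy => lt_of_le_of_lt hxy hy) ⟨p i, hp_lt i⟩).1 hlt2
      have h4 : ((⟨p i, hp_lt i⟩ : Fin s) : ℕ) = p i := rfl
      rw [h4, ← hqdef] at h3
      omega
    exact le_antisymm h1 (not_lt.1 h2)
  -- the new diagonals
  set B : ℕ → ℕ → ℕ := fun t i =>
    if h : t < s - 1 then
      (if t < p i then S i ⟨t, by omega⟩ else S i ⟨t+1, by omega⟩)
    else 0 with hB
  refine ⟨B, ?_, ?_⟩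
  · -- IsDiagSeq for each B t
    intro t ht
    have hts : t < s := by omega
    have ht1s : t + 1 < s := by omega
    refine ⟨?_, ?_, ?_⟩
    · intro i hi him
      have hpm := hpmono i hi him
      rw [hB]
      simp only [dif_pos ht]
      by_cases h1 : t < p (i+1)
      · rw [if_pos (by omega), if_pos h1]
        exact hcol _ i hi him
      · by_cases h2 : t < p i
        · rw [if_pos h2, if_neg h1]
          exact lt_of_lt_of_le (hcol ⟨t, hts⟩ i hi him)
            (hmono (i+1) (by rw [Fin.le_def]; simp))
        · rw [if_neg h2, if_neg h1]
          exact hcol _ i hi him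
    · rw [hB]
      simp only [dif_pos ht]
      rw [if_neg (by rw [hp1]; omega)]
      have h2 := hrow1 ⟨t+1, ht1s⟩
      have h4 : ((⟨t+1, ht1s⟩ : Fin s) : ℕ) = t + 1 := rfl
      rw [h4, show t + 1 + 1 = t + 2 from by omega] at h2
      exact h2
    · rw [hB]
      simp only [dif_pos ht]
      have h1 : S m ⟨t, hts⟩ ≤ S m ⟨t+1, ht1s⟩ := hmono m (by rw [Fin.le_def]; simp)
      have h2 := hrowm ⟨t+1, ht1s⟩
      have h4 : ((⟨t+1, ht1s⟩ : Fin s) : ℕ) = t + 1 := rfl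
      rw [h4, show t + 1 + 1 = t + 2 from by omega] at h2
      split <;> omega
  · -- the sum bound
    rw [Finsupp.le_def]
    intro x
    obtain ⟨i, b⟩ := x
    by_cases hi : i ∈ Finset.Icc 1 m
    · rw [Finset.mem_Icc] at hi
      obtain ⟨hi1, him⟩ := hi
      rw [sum_expVec_apply m (Finset.range (s-1)) B i b hi1 him]
      -- key counting identity
      set g : ℕ → ℕ := fun t => if h : t < s then (if S i ⟨t, h⟩ = b then 1 else 0) else 0 with hg
      have hkey : ∑ t ∈ Finset.range s, g t
          = g (p i) + ∑ t ∈ Finset.range (s-1), g (if t < p i then t else t + 1) :=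
        sum_skip s (p i) (hp_lt i) g
      have hL : ∑ t ∈ Finset.range s, g t = T i b := by
        rw [← Fin.sum_univ_eq_sum_range]
        have : ∀ t : Fin s, g t = if S i t = b then 1 else 0 := by
          intro t
          rw [hg]
          simp only [dif_pos t.2, Fin.eta]
        rw [Finset.sum_congr rfl (fun t _ => this t)]
        rw [Finset.sum_boole]
        rw [hcountP i (· = b)]
        simp [hT]
      have hR : ∑ t ∈ Finset.range (s-1), g (if t < p i then t else t + 1)
          = ((Finset.range (s-1)).filter (fun t => B t i = b)).card := by
        rw [Finset.card_filter]
        apply Finset.sum_congr rfl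
        intro t ht
        rw [Finset.mem_range] at ht
        rw [hg, hB]
        simp only [dif_pos ht]
        by_cases h1 : t < p i
        · rw [if_pos h1, if_pos h1, dif_pos (by omega)]
        · rw [if_neg h1, if_neg h1, dif_pos (by omega)]
      have hgp : g (p i) = if S i ⟨p i, hp_lt i⟩ = b then 1 else 0 := by
        rw [hg]; simp only [dif_pos (hp_lt i)]
      have hTle := hle' i b hi1 him
      rw [hL, hR, hgp] at hkey
      by_cases hcb : c i = b
      · subst hcb
        rw [if_pos rfl] at hTle
        by_cases hex : T i (c i) ≤ e (i, c i)
        · omega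
        · have hF := hF3 i hi1 him (by omega)
          rw [if_pos hF] at hkey
          omega
      · rw [if_neg hcb] at hTle
        omega
    · rw [sum_expVec_apply_zero m (Finset.range (s-1)) B i b hi]
      exact Nat.zero_le _

lemma diagMon_eq (K : Type*) [Field K] (m : ℕ) (c : ℕ → ℕ) :
    diagMon K m c = monomial (expVec m c) (1 : K) := by
  classical
  rw [diagMon, expVec]
  induction (Finset.Icc 1 m) using Finset.cons_induction with
  | empty => simp
  | cons a F ha ih =>
      rw [Finset.prod_cons, Finset.sum_cons, ih, X, monomial_mul, one_mul]

lemma prod_monomial {K : Type*} [Field K] (F : Finset ℕ) (d : ℕ → ((ℕ×ℕ) →₀ ℕ)) :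
    (∏ j ∈ F, monomial (d j) (1:K)) = monomial (∑ j ∈ F, d j) 1 := by
  classical
  induction F using Finset.cons_induction with
  | empty => simp
  | cons a F ha ih => rw [Finset.prod_cons, Finset.sum_cons, ih, monomial_mul, one_mul]

lemma span_prod {K : Type*} [Field K] (F : Finset ℕ) (D : ℕ → Set ((ℕ×ℕ) →₀ ℕ)) :
    ∏ j ∈ F, Ideal.span ((fun d => monomial d (1:K)) '' D j)
    = Ideal.span ((fun d => monomial d (1:K)) ''
        {e | ∃ f : ℕ → ((ℕ×ℕ) →₀ ℕ), (∀ j ∈ F, f j ∈ D j) ∧ e = ∑ j ∈ F, f j}) := by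
  classical
  induction F using Finset.cons_induction with
  | empty =>
      rw [Finset.prod_empty]
      have h : {e : (ℕ×ℕ) →₀ ℕ | ∃ f : ℕ → ((ℕ×ℕ) →₀ ℕ), (∀ j ∈ (∅:Finset ℕ), f j ∈ D j)
          ∧ e = ∑ j ∈ (∅:Finset ℕ), f j} = {0} := by
        ext e
        constructor
        · rintro ⟨f, -, rfl⟩; simp
        · rintro rfl; exact ⟨fun _ => 0, by simp, by simp⟩
      rw [h]
      simp [Ideal.one_eq_top, Ideal.span_singleton_eq_top]
  | cons a F ha ih =>
      rw [Finset.prod_cons, ih, Ideal.span_mul_span']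
      congr 1
      ext x
      constructor
      · rintro ⟨u, ⟨d, hd, rfl⟩, v, ⟨e', ⟨f, hf, rfl⟩, rfl⟩, rfl⟩
        refine ⟨d + ∑ j ∈ F, f j, ⟨Function.update f a d, ?_, ?_⟩, by simp [monomial_mul]⟩
        · intro j hj
          rcases Finset.mem_cons.1 hj with rfl | hj2
          · simpa using hd
          · rw [Function.update_of_ne (by rintro rfl; exact ha hj2)]; exact hf j hj2
        · rw [Finset.sum_cons, Function.update_self]
          congr 1
          exact Finset.sum_congr rfl fun j hj => (Function.update_of_ne (by rintro rfl; exact ha hj) _ _).symm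
      · rintro ⟨e, ⟨f, hf, rfl⟩, rfl⟩
        refine ⟨monomial (f a) 1, ⟨f a, hf a (Finset.mem_cons_self a F), rfl⟩,
          monomial (∑ j ∈ F, f j) 1, ⟨∑ j ∈ F, f j, ⟨f, fun j hj => hf j (Finset.mem_cons_of_mem hj), rfl⟩, rfl⟩, ?_⟩
        rw [Finset.sum_cons]; simp [monomial_mul]

lemma sum_Icc_one_fin {M : Type*} [AddCommMonoid M] (s : ℕ) (h : ℕ → M) :
    ∑ j ∈ Finset.Icc 1 s, h j = ∑ j : Fin s, h ((j:ℕ)+1) := by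
  rw [Fin.sum_univ_eq_sum_range (fun j => h (j+1)) s]
  apply Finset.sum_nbij' (fun j => j - 1) (fun j => j + 1)
  · intro j hj; simp only [Finset.mem_Icc] at hj; simp only [Finset.mem_range]; omega
  · intro j hj; simp only [Finset.mem_range] at hj; simp only [Finset.mem_Icc]; omega
  · intro j hj; simp only [Finset.mem_Icc] at hj; omega
  · intro j hj; omega
  · intro j hj; simp only [Finset.mem_Icc] at hj; congr 1; omega

lemma sum_Icc_two_range {M : Type*} [AddCommMonoid M] (s : ℕ) (h : ℕ → M) :
    ∑ j ∈ Finset.Icc 2 s, h j = ∑ t ∈ Finset.range (s-1), h (t+2) := by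
  apply Finset.sum_nbij' (fun j => j - 2) (fun t => t + 2)
  · intro j hj; simp only [Finset.mem_Icc] at hj; simp only [Finset.mem_range]; omega
  · intro t ht; simp only [Finset.mem_range] at ht; simp only [Finset.mem_Icc]; omega
  · intro j hj; simp only [Finset.mem_Icc] at hj; omega
  · intro t ht; omega
  · intro j hj; simp only [Finset.mem_Icc] at hj; congr 1; omega

/-- Let `s ≥ 2`, `1 ≤ k₁ ≤ ⋯ ≤ k_s < n`, `1 < l₁ ≤ ⋯ ≤ l_s ≤ n` with
`k_i < l_i`, `l_i - k_i + 1 ≥ m`.  Set `J = J_{k₁l₁}⋯J_{k_sl_s}` and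
`J' = J_{k₂l₂}⋯J_{k_sl_s}`.  For any diagonal monomial `f' = X_{1c₁}⋯X_{mc_m}` of
`Y_{k₁l₁}` (with `c₀ = k₁ - 1`), the colon ideal `(J : f')` is contained in the ideal
generated by `J'` together with the variables `X_{ib}`, `1 ≤ i ≤ m`,
`c_{i-1} < b < c_i`. -/
theorem stmt_9 (K : Type*) [Field K] (m n s : ℕ) (hm : 1 ≤ m) (hmn : m ≤ n) (hs : 2 ≤ s)
    (k l : ℕ → ℕ)
    (hk1 : 1 ≤ k 1) (hkmono : ∀ j, 1 ≤ j → j < s → k j ≤ k (j + 1)) (hks : k s < n)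
    (hl1 : 1 < l 1) (hlmono : ∀ j, 1 ≤ j → j < s → l j ≤ l (j + 1)) (hls : l s ≤ n)
    (hkl : ∀ j, 1 ≤ j → j ≤ s → k j < l j)
    (hlen : ∀ j, 1 ≤ j → j ≤ s → m ≤ l j - k j + 1)
    (c : ℕ → ℕ) (hc : IsDiagSeq m (k 1) (l 1) c) (hc0 : c 0 = k 1 - 1) :
    Submodule.colon (∏ j ∈ Finset.Icc 1 s, Jkl K m (k j) (l j))
        (Ideal.span {diagMon K m c}) ≤
      (∏ j ∈ Finset.Icc 2 s, Jkl K m (k j) (l j)) ⊔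
        Ideal.span {P : MvPolynomial (ℕ × ℕ) K |
          ∃ i b : ℕ, 1 ≤ i ∧ i ≤ m ∧ c (i - 1) < b ∧ b < c i ∧ P = MvPolynomial.X (i, b)} := by
  classical
  have hkmono' : ∀ a b, 1 ≤ a → a ≤ b → b ≤ s → k a ≤ k b := by
    intro a b ha hab hbs
    obtain ⟨d, rfl⟩ := Nat.exists_eq_add_of_le hab
    induction d with
    | zero => simp
    | succ d ih =>
        calc k a ≤ k (a+d) := ih (by omega) (by omega)
        _ ≤ k (a+d+1) := hkmono (a+d) (by omega) (by omega)
        _ = k (a + (d+1)) := by rw [Nat.add_assoc]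
  have hlmono' : ∀ a b, 1 ≤ a → a ≤ b → b ≤ s → l a ≤ l b := by
    intro a b ha hab hbs
    obtain ⟨d, rfl⟩ := Nat.exists_eq_add_of_le hab
    induction d with
    | zero => simp
    | succ d ih =>
        calc l a ≤ l (a+d) := ih (by omega) (by omega)
        _ ≤ l (a+d+1) := hlmono (a+d) (by omega) (by omega)
        _ = l (a + (d+1)) := by rw [Nat.add_assoc]
  set D : ℕ → Set ((ℕ×ℕ) →₀ ℕ) :=
    fun j => {d | ∃ a, IsDiagSeq m (k j) (l j) a ∧ d = expVec m a} with hD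
  have hJkl : ∀ j, Jkl K m (k j) (l j)
      = Ideal.span ((fun d => monomial d (1:K)) '' D j) := by
    intro j
    rw [Jkl]
    congr 1
    ext g
    constructor
    · rintro ⟨a, ha, rfl⟩; exact ⟨expVec m a, ⟨a, ha, rfl⟩, (diagMon_eq K m a).symm⟩
    · rintro ⟨d, ⟨a, ha, rfl⟩, rfl⟩; exact ⟨a, ha, (diagMon_eq K m a).symm⟩
  intro x hx
  have hxf : x * diagMon K m c ∈ ∏ j ∈ Finset.Icc 1 s, Jkl K m (k j) (l j) := by
    have := Submodule.mem_colon.1 hx (diagMon K m c) (Ideal.subset_span (Set.mem_singleton _))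
    simpa [smul_eq_mul] using this
  rw [Finset.prod_congr rfl (fun j _ => hJkl j), span_prod] at hxf
  rw [mem_ideal_span_monomial_image] at hxf
  -- decompose x into monomials
  rw [← MvPolynomial.support_sum_monomial_coeff x]
  apply Ideal.sum_mem
  intro v hv
  -- the corresponding monomial of x * f' :
  have hvmem : v + expVec m c ∈ (x * diagMon K m c).support := by
    rw [MvPolynomial.mem_support_iff, diagMon_eq, MvPolynomial.coeff_mul_monomial, mul_one]
    exact MvPolynomial.mem_support_iff.1 hv
  obtain ⟨d, hdT, hdle⟩ := hxf _ hvmem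
  obtain ⟨f, hf, rfl⟩ := hdT
  -- choose the diagonal sequences
  have hfa : ∀ j ∈ Finset.Icc 1 s, ∃ a, IsDiagSeq m (k j) (l j) a ∧ f j = expVec m a := hf
  by_cases hgapvar : ∃ i b : ℕ, 1 ≤ i ∧ i ≤ m ∧ c (i-1) < b ∧ b < c i ∧ v (i, b) ≠ 0
  · -- gap variable divides: right part of the sup
    obtain ⟨i, b, hi1, him, hb1, hb2, hvne⟩ := hgapvar
    apply Ideal.mem_sup_right
    have hX : MvPolynomial.X (i, b) ∈ Ideal.span {P : MvPolynomial (ℕ × ℕ) K |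
        ∃ i b : ℕ, 1 ≤ i ∧ i ≤ m ∧ c (i - 1) < b ∧ b < c i ∧ P = MvPolynomial.X (i, b)} :=
      Ideal.subset_span ⟨i, b, hi1, him, hb1, hb2, rfl⟩
    have heq : monomial v (MvPolynomial.coeff v x)
        = (monomial (v - Finsupp.single (i,b) 1) (MvPolynomial.coeff v x)) * MvPolynomial.X (i, b) := by
      rw [X, monomial_mul, mul_one, tsub_add_cancel_of_le]
      exact Finsupp.single_le_iff.2 (by omega)
    rw [heq]
    exact Ideal.mul_mem_left _ _ hX
  · -- no gap variable : use the core lemma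
    push_neg at hgapvar
    set a : ℕ → ℕ → ℕ := fun j =>
      if h : ∃ a, IsDiagSeq m (k j) (l j) a ∧ f j = expVec m a then h.choose else 0 with haDef
    have haSpec : ∀ j ∈ Finset.Icc 1 s,
        IsDiagSeq m (k j) (l j) (a j) ∧ f j = expVec m (a j) := by
      intro j hj
      have h := hfa j hj
      simp only [haDef, dif_pos h]
      exact h.choose_spec
    have hsum : ∑ j ∈ Finset.Icc 1 s, f j = ∑ j : Fin s, expVec m (a ((j:ℕ)+1)) := by
      rw [Finset.sum_congr rfl (fun j hj => (haSpec j hj).2)]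
      exact sum_Icc_one_fin s (fun j => expVec m (a j))
    have hle : ∑ j : Fin s, expVec m (a ((j:ℕ)+1)) ≤ v + expVec m c := by
      rw [← hsum]; exact hdle
    obtain ⟨B, hBdiag, hBsum⟩ := core m s hm hs k l c hkmono' hlmono' hk1 hc hc0
      (fun j => a ((j:ℕ)+1))
      (fun j => (haSpec ((j:ℕ)+1) (by simp only [Finset.mem_Icc]; omega)).1)
      v hle
      (fun i b hi him h1 h2 => hgapvar i b hi him h1 h2)
    apply Ideal.mem_sup_left
    -- the product of the new diagonal monomials
    set b' : ℕ → ℕ → ℕ := fun j => B (j - 2) with hb'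
    have hb'diag : ∀ j ∈ Finset.Icc 2 s, IsDiagSeq m (k j) (l j) (b' j) := by
      intro j hj
      simp only [Finset.mem_Icc] at hj
      have := hBdiag (j-2) (by omega)
      rw [show j - 2 + 2 = j from by omega] at this
      exact this
    have hb'sum : ∑ j ∈ Finset.Icc 2 s, expVec m (b' j) = ∑ t ∈ Finset.range (s-1), expVec m (B t) := by
      rw [sum_Icc_two_range s (fun j => expVec m (b' j))]
      apply Finset.sum_congr rfl
      intro t ht
      simp only [hb']
      rw [show t + 2 - 2 = t from by omega]
    have hprod : (∏ j ∈ Finset.Icc 2 s, diagMon K m (b' j))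
        = monomial (∑ j ∈ Finset.Icc 2 s, expVec m (b' j)) (1:K) := by
      rw [Finset.prod_congr rfl (fun j _ => diagMon_eq K m (b' j)), prod_monomial]
    have hprodmem : (∏ j ∈ Finset.Icc 2 s, diagMon K m (b' j))
        ∈ ∏ j ∈ Finset.Icc 2 s, Jkl K m (k j) (l j) := by
      apply Ideal.prod_mem_prod
      intro j hj
      exact Ideal.subset_span ⟨b' j, hb'diag j hj, rfl⟩
    have hdlev : ∑ j ∈ Finset.Icc 2 s, expVec m (b' j) ≤ v := by
      rw [hb'sum]; exact hBsum
    have heq : monomial v (MvPolynomial.coeff v x)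
        = (monomial (v - ∑ j ∈ Finset.Icc 2 s, expVec m (b' j)) (MvPolynomial.coeff v x))
          * (∏ j ∈ Finset.Icc 2 s, diagMon K m (b' j)) := by
      rw [hprod, monomial_mul, mul_one, tsub_add_cancel_of_le hdlev]
    rw [heq]
    exact Ideal.mul_mem_left _ _ hprodmem
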